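/- (Doubly robust ATE identity.) Assume β0(X) ≥ β_min almost surely for some constant β_min > 0. Then for every bounded measurable function θ_pre of X, E[ θ_pre(X) + (Y − q0(X) − θ_pre(X)·(T − p0(X)))·(Z − r0(X)) / β0(X) ] = E[θ0(X)]; i.e., the doubly robust quantity recovers the average treatment effect regardless of the preliminary effect estimate θ_pre, provided the remaining nuisances are correct. -/

import Mathlib

open MeasureTheory


private lemma intb_aux {Ω : Type*} [MeasurableSpace Ω] {μ : MeasureTheory.Measure Ω}
    [MeasureTheory.IsFiniteMeasure μ] (f : Ω → ℝ) (C : ℝ)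
    (hmf : MeasureTheory.AEStronglyMeasurable f μ) (hb : ∀ᵐ ω ∂μ, |f ω| ≤ C) :
    MeasureTheory.Integrable f μ :=
  MeasureTheory.Integrable.mono' (MeasureTheory.integrable_const C) hmf
    (by simpa [Real.norm_eq_abs] using hb)

private lemma key_aux {Ω : Type*} {m0 : MeasurableSpace Ω} {μ : MeasureTheory.Measure Ω}
    {m : MeasurableSpace Ω} (hm : m ≤ m0) [MeasureTheory.SigmaFinite (μ.trim hm)]
    (g f : Ω → ℝ) (hg : StronglyMeasurable[m] g)
    (hgf : MeasureTheory.Integrable (g * f) μ) (hf : MeasureTheory.Integrable f μ) :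
    ∫ ω, g ω * f ω ∂μ = ∫ ω, g ω * (μ[f|m]) ω ∂μ :=
  calc ∫ ω, g ω * f ω ∂μ = ∫ ω, (μ[g * f|m]) ω ∂μ :=
        (MeasureTheory.integral_condExp hm).symm
    _ = ∫ ω, g ω * (μ[f|m]) ω ∂μ :=
        MeasureTheory.integral_congr_ae
          ((MeasureTheory.condExp_mul_of_stronglyMeasurable_left hg hgf hf).mono fun ω h => h)

theorem stmt_10
    {Ω 𝓧 : Type*} [MeasurableSpace Ω] [MeasurableSpace 𝓧] [StandardBorelSpace 𝓧]
    (μ : Measure Ω) [IsProbabilityMeasure μ]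
    (Y T Z : Ω → ℝ) (X : Ω → 𝓧)
    (hY : Measurable Y) (hT : Measurable T) (hZ : Measurable Z) (hX : Measurable X)
    (hYbdd : ∃ C, ∀ ω, |Y ω| ≤ C) (hTbdd : ∃ C, ∀ ω, |T ω| ≤ C)
    (hZbdd : ∃ C, ∀ ω, |Z ω| ≤ C)
    (θ0 f0 : 𝓧 → ℝ) (hθ0m : Measurable θ0) (hf0m : Measurable f0)
    (hθ0bdd : ∃ C, ∀ x, |θ0 x| ≤ C) (hf0bdd : ∃ C, ∀ x, |f0 x| ≤ C)
    (hIV : μ[fun ω => Y ω - θ0 (X ω) * T ω - f0 (X ω) |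
        MeasurableSpace.comap (fun ω => (Z ω, X ω)) inferInstance] =ᵐ[μ] 0)
    (q0 p0 r0 : 𝓧 → ℝ) (hq0m : Measurable q0) (hp0m : Measurable p0) (hr0m : Measurable r0)
    (hq0bdd : ∃ C, ∀ x, |q0 x| ≤ C) (hp0bdd : ∃ C, ∀ x, |p0 x| ≤ C)
    (hr0bdd : ∃ C, ∀ x, |r0 x| ≤ C)
    (hq0 : (fun ω => q0 (X ω)) =ᵐ[μ] μ[Y | MeasurableSpace.comap X inferInstance])
    (hp0 : (fun ω => p0 (X ω)) =ᵐ[μ] μ[T | MeasurableSpace.comap X inferInstance])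
    (hr0 : (fun ω => r0 (X ω)) =ᵐ[μ] μ[Z | MeasurableSpace.comap X inferInstance])
    (h0 : ℝ × 𝓧 → ℝ) (hh0m : Measurable h0) (hh0bdd : ∃ C, ∀ zx, |h0 zx| ≤ C)
    (hh0 : (fun ω => h0 (Z ω, X ω)) =ᵐ[μ]
        μ[T | MeasurableSpace.comap (fun ω => (Z ω, X ω)) inferInstance])
    (β0 : 𝓧 → ℝ) (hβ0m : Measurable β0) (hβ0bdd : ∃ C, ∀ x, |β0 x| ≤ C)
    (hβ0 : (fun ω => β0 (X ω)) =ᵐ[μ]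
        μ[fun ω => (T ω - p0 (X ω)) * (Z ω - r0 (X ω)) | MeasurableSpace.comap X inferInstance])
    (V0 : 𝓧 → ℝ) (hV0m : Measurable V0) (hV0bdd : ∃ C, ∀ x, |V0 x| ≤ C)
    (hV0 : (fun ω => V0 (X ω)) =ᵐ[μ]
        μ[fun ω => (h0 (Z ω, X ω) - p0 (X ω)) ^ 2 | MeasurableSpace.comap X inferInstance])
    (βmin : ℝ) (hβmin : 0 < βmin) (hβlb : ∀ᵐ ω ∂μ, βmin ≤ β0 (X ω))
    (θpre : 𝓧 → ℝ) (hθprem : Measurable θpre) (hθprebdd : ∃ C, ∀ x, |θpre x| ≤ C) :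
    (∫ ω, (θpre (X ω)
        + (Y ω - q0 (X ω) - θpre (X ω) * (T ω - p0 (X ω))) * (Z ω - r0 (X ω)) / β0 (X ω)) ∂μ)
      = ∫ ω, θ0 (X ω) ∂μ := by

  rename_i mΩ m𝓧 hsb hprob
  obtain ⟨Cy, hCy⟩ := hYbdd
  obtain ⟨Ct, hCt⟩ := hTbdd
  obtain ⟨Cz, hCz⟩ := hZbdd
  obtain ⟨Cth, hCth⟩ := hθ0bdd
  obtain ⟨Cf, hCf⟩ := hf0bdd
  obtain ⟨Cq, hCq⟩ := hq0bdd
  obtain ⟨Cp, hCp⟩ := hp0bdd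
  obtain ⟨Cr, hCr⟩ := hr0bdd
  obtain ⟨Cpre, hCpre⟩ := hθprebdd
  set mX : MeasurableSpace Ω := MeasurableSpace.comap X inferInstance with hmXdef
  set mZX : MeasurableSpace Ω :=
    MeasurableSpace.comap (fun ω => (Z ω, X ω)) inferInstance with hmZXdef
  have hmX : mX ≤ mΩ := hX.comap_le
  have hmZX : mZX ≤ mΩ := (hZ.prodMk hX).comap_le
  haveI : IsFiniteMeasure (μ.trim hmX) := isFiniteMeasure_trim hmX
  haveI : IsFiniteMeasure (μ.trim hmZX) := isFiniteMeasure_trim hmZX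
  letI mΩ' : MeasurableSpace Ω := mΩ
  have hXm : Measurable[mX] X := Measurable.of_comap_le le_rfl
  have hZXm : Measurable[mZX] (fun ω => (Z ω, X ω)) := Measurable.of_comap_le le_rfl
  -- positivity of beta0
  have hβpos : ∀ᵐ ω ∂μ, 0 < β0 (X ω) := hβlb.mono fun ω h => lt_of_lt_of_le hβmin h
  -- the three pieces
  set w : Ω → ℝ := fun ω => (Z ω - r0 (X ω)) / β0 (X ω) with hwdef
  set g2 : Ω → ℝ := fun ω => (θ0 (X ω) - θpre (X ω)) / β0 (X ω) with hg2def
  set g3 : Ω → ℝ := fun ω => (θ0 (X ω) * p0 (X ω) + f0 (X ω) - q0 (X ω)) / β0 (X ω) with hg3def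
  set f1 : Ω → ℝ := fun ω => Y ω - θ0 (X ω) * T ω - f0 (X ω) with hf1def
  set f2 : Ω → ℝ := fun ω => (T ω - p0 (X ω)) * (Z ω - r0 (X ω)) with hf2def
  set f3 : Ω → ℝ := fun ω => Z ω - r0 (X ω) with hf3def
  -- pointwise bounds of numerators
  have habs : ∀ (a : ℝ) (C : ℝ), |a| ≤ C → |a| ≤ |C| := fun a C h => h.trans (le_abs_self C)
  have hbf1 : ∀ ω, |f1 ω| ≤ |Cy| + |Cth| * |Ct| + |Cf| := by
    intro ω
    have h1 : |θ0 (X ω) * T ω| ≤ |Cth| * |Ct| := by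
      rw [abs_mul]
      exact mul_le_mul (habs _ _ (hCth _)) (habs _ _ (hCt _)) (abs_nonneg _) (abs_nonneg _)
    calc |Y ω - θ0 (X ω) * T ω - f0 (X ω)|
        ≤ |Y ω - θ0 (X ω) * T ω| + |f0 (X ω)| := abs_sub _ _
      _ ≤ |Y ω| + |θ0 (X ω) * T ω| + |f0 (X ω)| := by
          have := abs_sub (Y ω) (θ0 (X ω) * T ω); linarith
      _ ≤ |Cy| + |Cth| * |Ct| + |Cf| := by
          have := habs _ _ (hCy ω); have := habs _ _ (hCf (X ω)); linarith
  have hbf2 : ∀ ω, |f2 ω| ≤ (|Ct| + |Cp|) * (|Cz| + |Cr|) := by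
    intro ω
    rw [hf2def, abs_mul]
    have h1 : |T ω - p0 (X ω)| ≤ |Ct| + |Cp| := by
      have := abs_sub (T ω) (p0 (X ω))
      have := habs _ _ (hCt ω); have := habs _ _ (hCp (X ω)); linarith
    have h2 : |Z ω - r0 (X ω)| ≤ |Cz| + |Cr| := by
      have := abs_sub (Z ω) (r0 (X ω))
      have := habs _ _ (hCz ω); have := habs _ _ (hCr (X ω)); linarith
    exact mul_le_mul h1 h2 (abs_nonneg _) (by positivity)
  have hbf3 : ∀ ω, |f3 ω| ≤ |Cz| + |Cr| := by
    intro ω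
    have := abs_sub (Z ω) (r0 (X ω))
    have := habs _ _ (hCz ω); have := habs _ _ (hCr (X ω))
    simp only [hf3def]; linarith
  -- a.e. bound for quotients by beta0
  have hdivb : ∀ (n : Ω → ℝ) (Cn : ℝ), (∀ ω, |n ω| ≤ Cn) →
      ∀ᵐ ω ∂μ, |n ω / β0 (X ω)| ≤ |Cn| / βmin := by
    intro n Cn hn
    filter_upwards [hβlb] with ω hβ
    rw [abs_div]
    have h1 : |β0 (X ω)| = β0 (X ω) := abs_of_pos (lt_of_lt_of_le hβmin hβ)
    rw [h1]
    exact div_le_div₀ (abs_nonneg Cn) (habs _ _ (hn ω)) hβmin hβ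
  -- a.e. bounds of quotient factors
  have hbw : ∀ᵐ ω ∂μ, |w ω| ≤ |(|Cz| + |Cr|)| / βmin := hdivb f3 _ hbf3
  have hbg2 : ∀ᵐ ω ∂μ, |g2 ω| ≤ |(|Cth| + |Cpre|)| / βmin := by
    refine hdivb _ _ ?_
    intro ω
    have := abs_sub (θ0 (X ω)) (θpre (X ω))
    have := habs _ _ (hCth (X ω)); have := habs _ _ (hCpre (X ω)); linarith
  have hbg3 : ∀ᵐ ω ∂μ, |g3 ω| ≤ |(|Cth| * |Cp| + |Cf| + |Cq|)| / βmin := by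
    refine hdivb _ _ ?_
    intro ω
    have h1 : |θ0 (X ω) * p0 (X ω)| ≤ |Cth| * |Cp| := by
      rw [abs_mul]
      exact mul_le_mul (habs _ _ (hCth _)) (habs _ _ (hCp _)) (abs_nonneg _) (abs_nonneg _)
    calc |θ0 (X ω) * p0 (X ω) + f0 (X ω) - q0 (X ω)|
        ≤ |θ0 (X ω) * p0 (X ω) + f0 (X ω)| + |q0 (X ω)| := abs_sub _ _
      _ ≤ |θ0 (X ω) * p0 (X ω)| + |f0 (X ω)| + |q0 (X ω)| := by
          have := abs_add_le (θ0 (X ω) * p0 (X ω)) (f0 (X ω)); linarith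
      _ ≤ |Cth| * |Cp| + |Cf| + |Cq| := by
          have := habs _ _ (hCf (X ω)); have := habs _ _ (hCq (X ω)); linarith
  -- ambient measurability
  have hwM : Measurable[mΩ] w := (hZ.sub (hr0m.comp hX)).div (hβ0m.comp hX)
  have hg2M : Measurable[mΩ] g2 := ((hθ0m.comp hX).sub (hθprem.comp hX)).div (hβ0m.comp hX)
  have hg3M : Measurable[mΩ] g3 :=
    (((hθ0m.comp hX).mul (hp0m.comp hX)).add (hf0m.comp hX) |>.sub (hq0m.comp hX)).div
      (hβ0m.comp hX)
  have hf1M : Measurable[mΩ] f1 := (hY.sub ((hθ0m.comp hX).mul hT)).sub (hf0m.comp hX)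
  have hf2M : Measurable[mΩ] f2 := (hT.sub (hp0m.comp hX)).mul (hZ.sub (hr0m.comp hX))
  have hf3M : Measurable[mΩ] f3 := hZ.sub (hr0m.comp hX)
  -- sub-sigma-algebra measurability
  have hwSM : StronglyMeasurable[mZX] w := by
    have : Measurable (fun p : ℝ × 𝓧 => (p.1 - r0 p.2) / β0 p.2) :=
      (measurable_fst.sub (hr0m.comp measurable_snd)).div (hβ0m.comp measurable_snd)
    exact (this.comp hZXm).stronglyMeasurable
  have hg2SM : StronglyMeasurable[mX] g2 :=
    (((hθ0m.sub hθprem).div hβ0m).comp hXm).stronglyMeasurable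
  have hg3SM : StronglyMeasurable[mX] g3 :=
    ((((hθ0m.mul hp0m).add hf0m |>.sub hq0m).div hβ0m).comp hXm).stronglyMeasurable
  -- product a.e. bounds
  have hmulb : ∀ (a b : Ω → ℝ) (Ca Cb : ℝ), (∀ᵐ ω ∂μ, |a ω| ≤ Ca) → (∀ ω, |b ω| ≤ Cb) →
      ∀ᵐ ω ∂μ, |a ω * b ω| ≤ Ca * |Cb| := by
    intro a b Ca Cb ha hb
    filter_upwards [ha] with ω h1
    rw [abs_mul]
    exact mul_le_mul h1 (habs _ _ (hb ω)) (abs_nonneg _) ((abs_nonneg _).trans h1)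
  -- integrabilities
  have int_f1 : Integrable f1 μ := intb_aux (μ := μ) f1 _ hf1M.aestronglyMeasurable (ae_of_all μ hbf1)
  have int_f2 : Integrable f2 μ := intb_aux (μ := μ) f2 _ hf2M.aestronglyMeasurable (ae_of_all μ hbf2)
  have int_f3 : Integrable f3 μ := intb_aux (μ := μ) f3 _ hf3M.aestronglyMeasurable (ae_of_all μ hbf3)
  have int_t1 : Integrable (w * f1) μ :=
    intb_aux (μ := μ) _ _ (hwM.mul hf1M).aestronglyMeasurable (hmulb w f1 _ _ hbw hbf1)
  have int_t2 : Integrable (g2 * f2) μ :=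
    intb_aux (μ := μ) _ _ (hg2M.mul hf2M).aestronglyMeasurable (hmulb g2 f2 _ _ hbg2 hbf2)
  have int_t3 : Integrable (g3 * f3) μ :=
    intb_aux (μ := μ) _ _ (hg3M.mul hf3M).aestronglyMeasurable (hmulb g3 f3 _ _ hbg3 hbf3)
  have int_pre : Integrable (fun ω => θpre (X ω)) μ :=
    intb_aux (μ := μ) _ _ (hθprem.comp hX).aestronglyMeasurable (ae_of_all μ fun ω => habs _ _ (hCpre (X ω)))
  have int_th : Integrable (fun ω => θ0 (X ω)) μ :=
    intb_aux (μ := μ) _ _ (hθ0m.comp hX).aestronglyMeasurable (ae_of_all μ fun ω => habs _ _ (hCth (X ω)))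
  have int_r : Integrable (fun ω => r0 (X ω)) μ :=
    intb_aux (μ := μ) _ _ (hr0m.comp hX).aestronglyMeasurable (ae_of_all μ fun ω => habs _ _ (hCr (X ω)))
  have int_Z : Integrable Z μ := intb_aux (μ := μ) _ _ hZ.aestronglyMeasurable
    (ae_of_all μ fun ω => habs _ _ (hCz ω))
  -- term 1 is zero
  have I1 : ∫ ω, w ω * f1 ω ∂μ = 0 := by
    rw [key_aux hmZX w f1 hwSM int_t1 int_f1]
    have : (fun ω => w ω * (μ[f1|mZX]) ω) =ᵐ[μ] 0 := by
      filter_upwards [hIV] with ω h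
      have h' : (μ[f1|mZX]) ω = 0 := h
      simp [h']
    rw [integral_congr_ae this]
    simp
  -- term 2
  have I2 : ∫ ω, g2 ω * f2 ω ∂μ = (∫ ω, θ0 (X ω) ∂μ) - ∫ ω, θpre (X ω) ∂μ := by
    rw [key_aux hmX g2 f2 hg2SM int_t2 int_f2]
    have h1 : (fun ω => g2 ω * (μ[f2|mX]) ω) =ᵐ[μ] fun ω => θ0 (X ω) - θpre (X ω) := by
      filter_upwards [hβ0, hβpos] with ω h hp
      have h' : (μ[f2|mX]) ω = β0 (X ω) := h.symm
      rw [h', hg2def]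
      exact div_mul_cancel₀ _ (ne_of_gt hp)
    rw [integral_congr_ae h1]
    exact integral_sub int_th int_pre
  -- conditional expectation of f3 is zero
  have hEf3 : μ[f3|mX] =ᵐ[μ] 0 := by
    have hsub : μ[f3|mX] =ᵐ[μ] μ[Z|mX] - μ[(fun ω => r0 (X ω))|mX] := by
      have : f3 = Z - fun ω => r0 (X ω) := rfl
      rw [this]
      exact condExp_sub int_Z int_r mX
    have hr0' : μ[(fun ω => r0 (X ω))|mX] = fun ω => r0 (X ω) :=
      condExp_of_stronglyMeasurable hmX ((hr0m.comp hXm).stronglyMeasurable) int_r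
    filter_upwards [hsub, hr0] with ω h1 h2
    have h2' : (μ[Z|mX]) ω = r0 (X ω) := h2.symm
    simp only [Pi.sub_apply, hr0'] at h1
    simp [h1, h2']
  -- term 3 is zero
  have I3 : ∫ ω, g3 ω * f3 ω ∂μ = 0 := by
    rw [key_aux hmX g3 f3 hg3SM int_t3 int_f3]
    have : (fun ω => g3 ω * (μ[f3|mX]) ω) =ᵐ[μ] 0 := by
      filter_upwards [hEf3] with ω h
      have h' : (μ[f3|mX]) ω = 0 := h
      simp [h']
    rw [integral_congr_ae this]
    simp
  -- pointwise decomposition of the integrand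
  have hdecomp : ∀ ω, θpre (X ω)
      + (Y ω - q0 (X ω) - θpre (X ω) * (T ω - p0 (X ω))) * (Z ω - r0 (X ω)) / β0 (X ω)
      = θpre (X ω) + (w ω * f1 ω + (g2 ω * f2 ω + g3 ω * f3 ω)) := by
    intro ω
    simp only [hwdef, hg2def, hg3def, hf1def, hf2def, hf3def]
    ring
  calc (∫ ω, (θpre (X ω)
        + (Y ω - q0 (X ω) - θpre (X ω) * (T ω - p0 (X ω))) * (Z ω - r0 (X ω)) / β0 (X ω)) ∂μ)
      = ∫ ω, (θpre (X ω) + (w ω * f1 ω + (g2 ω * f2 ω + g3 ω * f3 ω))) ∂μ := by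
        exact integral_congr_ae (ae_of_all μ hdecomp)
    _ = (∫ ω, θpre (X ω) ∂μ) + ((∫ ω, w ω * f1 ω ∂μ) + ((∫ ω, g2 ω * f2 ω ∂μ)
          + ∫ ω, g3 ω * f3 ω ∂μ)) := by
        have int_t1' : Integrable (fun ω => w ω * f1 ω) μ := int_t1
        have int_t2' : Integrable (fun ω => g2 ω * f2 ω) μ := int_t2
        have int_t3' : Integrable (fun ω => g3 ω * f3 ω) μ := int_t3
        have hs23 : Integrable (fun ω => g2 ω * f2 ω + g3 ω * f3 ω) μ := int_t2'.add int_t3'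
        have hs123 : Integrable (fun ω => w ω * f1 ω + (g2 ω * f2 ω + g3 ω * f3 ω)) μ :=
          int_t1'.add hs23
        rw [integral_add int_pre hs123, integral_add int_t1' hs23,
          integral_add int_t2' int_t3']
    _ = ∫ ω, θ0 (X ω) ∂μ := by rw [I1, I2, I3]; ring
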